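/- Let X be an integrable real random variable on a probability space and β ∈ (0,1), and suppose ℙ[X ≤ VaR_β[X]] = β (as holds when X has a continuous distribution). Then CVaR_β[X] = (1−β)^{−1}·E[X·1_{{X > VaR_β[X]}}]; that is, since ℙ[X > VaR_β[X]] = 1 − β > 0, CVaR_β[X] equals the conditional expectation E[X | X > VaR_β[X]], the average of the β-tail of the distribution of X. -/

import Mathlib

open MeasureTheory

private lemma CVaR_key_ineq (x v t : ℝ) :
    max (x - v) 0 + (v - t) * (if v < x then (1:ℝ) else 0) ≤ max (x - t) 0 := by
  rcases le_or_gt x v with h | h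
  · rw [if_neg (not_lt.mpr h), mul_zero, add_zero, max_eq_right (by linarith : x - v ≤ 0)]
    exact le_max_right _ _
  · rw [if_pos h, mul_one, max_eq_left (by linarith : (0:ℝ) ≤ x - v)]
    rcases le_or_gt x t with h2 | h2
    · rw [max_eq_right (by linarith : x - t ≤ 0)]; linarith
    · rw [max_eq_left (by linarith : (0:ℝ) ≤ x - t)]; linarith

/-- Let `X` be integrable on a probability space, `β ∈ (0,1)`, and suppose
`ℙ[X ≤ VaR_β[X]] = β` (as holds for a continuous distribution), where
`VaR_β[X] = inf {t : ℙ[X ≤ t] ≥ β}`. Then `ℙ[X > VaR_β[X]] = 1 − β > 0` and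
`CVaR_β[X] = (1−β)⁻¹·E[X·1_{X > VaR_β[X]}]`, i.e. `CVaR_β[X]` is the average of the
`β`-tail of the distribution of `X`. -/
theorem CVaR_eq_tail_average {Ω : Type*} [MeasurableSpace Ω]
    (μ : Measure Ω) [IsProbabilityMeasure μ] (X : Ω → ℝ) (hX : Integrable X μ)
    (β : ℝ) (hβ : β ∈ Set.Ioo (0 : ℝ) 1)
    (v : ℝ) (hv : v = sInf {t : ℝ | β ≤ (μ {ω | X ω ≤ t}).toReal})
    (hq : (μ {ω | X ω ≤ v}).toReal = β) :
    (μ {ω | v < X ω}).toReal = 1 - β ∧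
    (⨅ t : ℝ, (t + (1 - β)⁻¹ * ∫ ω, max (X ω - t) 0 ∂μ))
      = (1 - β)⁻¹ * ∫ ω in {ω | v < X ω}, X ω ∂μ := by
  obtain ⟨hβ0, hβ1⟩ := hβ
  have hc : (0:ℝ) < 1 - β := by linarith
  set Y := hX.1.mk X with hYdef
  have hYm : StronglyMeasurable Y := hX.1.stronglyMeasurable_mk
  have hXY : X =ᵐ[μ] Y := hX.1.ae_eq_mk
  have hY : Integrable Y μ := hX.congr hXY
  have hsetle : {ω | X ω ≤ v} =ᵐ[μ] {ω | Y ω ≤ v} := by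
    filter_upwards [hXY] with ω h
    change (X ω ≤ v) = (Y ω ≤ v)
    rw [h]
  have hsetgt : {ω | v < X ω} =ᵐ[μ] {ω | v < Y ω} := by
    filter_upwards [hXY] with ω h
    change (v < X ω) = (v < Y ω)
    rw [h]
  have hmeas : MeasurableSet {ω | v < Y ω} := measurableSet_lt measurable_const hYm.measurable
  have hmeasle : MeasurableSet {ω | Y ω ≤ v} := measurableSet_le hYm.measurable measurable_const
  have hqY : (μ {ω | Y ω ≤ v}).toReal = β := by
    rw [← measure_congr hsetle]; exact hq
  have hcompl : {ω | v < Y ω} = {ω | Y ω ≤ v}ᶜ := by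
    ext ω; simp [not_le]
  have hμgtY : (μ {ω | v < Y ω}).toReal = 1 - β := by
    rw [hcompl, measure_compl hmeasle (measure_ne_top μ _), measure_univ,
      ENNReal.toReal_sub_of_le prob_le_one ENNReal.one_ne_top, ENNReal.toReal_one, hqY]
  have hμgt : (μ {ω | v < X ω}).toReal = 1 - β := by
    rw [measure_congr hsetgt]; exact hμgtY
  refine ⟨hμgt, ?_⟩
  have hintY : ∀ t : ℝ, Integrable (fun ω => max (Y ω - t) 0) μ := fun t =>
    (hY.sub (integrable_const t)).pos_part
  have hintXY : ∀ t : ℝ, ∫ ω, max (X ω - t) 0 ∂μ = ∫ ω, max (Y ω - t) 0 ∂μ := fun t =>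
    integral_congr_ae (hXY.mono fun ω h => by dsimp only; rw [h])
  set F : ℝ → ℝ := fun t => t + (1 - β)⁻¹ * ∫ ω, max (X ω - t) 0 ∂μ with hF
  -- indicator function
  have hind_eq : (fun ω => if v < Y ω then (1:ℝ) else 0)
      = Set.indicator {ω | v < Y ω} (fun _ => (1:ℝ)) := by
    funext ω; simp [Set.indicator_apply, Set.mem_setOf_eq]
  have hind_int : Integrable (fun ω => if v < Y ω then (1:ℝ) else 0) μ := by
    rw [hind_eq]; exact (integrable_const (1:ℝ)).indicator hmeas
  have hind_integral : ∫ ω, (if v < Y ω then (1:ℝ) else 0) ∂μ = 1 - β := by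
    rw [hind_eq, integral_indicator_const (1:ℝ) hmeas, smul_eq_mul, mul_one, measureReal_def, hμgtY]
  -- lower bound
  have hlb : ∀ t : ℝ, F v ≤ F t := by
    intro t
    have hmono : ∫ ω, (max (Y ω - v) 0 + (v - t) * (if v < Y ω then (1:ℝ) else 0)) ∂μ
        ≤ ∫ ω, max (Y ω - t) 0 ∂μ := by
      refine integral_mono ((hintY v).add (hind_int.const_mul (v - t))) (hintY t) ?_
      intro ω
      exact CVaR_key_ineq (Y ω) v t
    rw [integral_add (hintY v) (hind_int.const_mul (v - t)), integral_const_mul,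
      hind_integral] at hmono
    have key : ∫ ω, max (Y ω - v) 0 ∂μ + (v - t) * (1 - β) ≤ ∫ ω, max (Y ω - t) 0 ∂μ := hmono
    simp only [hF, hintXY]
    have h2 : (1 - β)⁻¹ * (∫ ω, max (Y ω - v) 0 ∂μ + (v - t) * (1 - β))
        ≤ (1 - β)⁻¹ * ∫ ω, max (Y ω - t) 0 ∂μ :=
      mul_le_mul_of_nonneg_left key (by positivity)
    have h3 : (1 - β)⁻¹ * ((v - t) * (1 - β)) = v - t := by
      field_simp
    rw [mul_add, h3] at h2
    linarith
  have hbdd : BddBelow (Set.range F) := ⟨F v, by rintro _ ⟨t, rfl⟩; exact hlb t⟩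
  have hinf : ⨅ t : ℝ, F t = F v := le_antisymm (ciInf_le hbdd v) (le_ciInf hlb)
  rw [hinf]
  -- compute F v
  have hmax_eq : (fun ω => max (Y ω - v) 0)
      = Set.indicator {ω | v < Y ω} (fun ω => Y ω - v) := by
    funext ω
    rcases le_or_gt (Y ω) v with h | h
    · rw [Set.indicator_of_notMem (by simpa [Set.mem_setOf_eq, not_lt] using h),
        max_eq_right (by linarith)]
    · rw [Set.indicator_of_mem (by simpa [Set.mem_setOf_eq] using h),
        max_eq_left (by linarith)]
  have hIY : ∫ ω in {ω | v < X ω}, X ω ∂μ = ∫ ω in {ω | v < Y ω}, Y ω ∂μ := by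
    rw [setIntegral_congr_set hsetgt]
    exact integral_congr_ae (ae_restrict_of_ae (hXY.mono fun ω h => h))
  have hFv : ∫ ω, max (Y ω - v) 0 ∂μ
      = (∫ ω in {ω | v < Y ω}, Y ω ∂μ) - v * (1 - β) := by
    rw [hmax_eq, integral_indicator hmeas,
      integral_sub (hY.restrict) (integrable_const v), setIntegral_const, smul_eq_mul,
      measureReal_def, hμgtY]
    ring
  simp only [hF, hintXY, hFv, ← hIY]
  have h3 : (1 - β)⁻¹ * (v * (1 - β)) = v := by field_simp
  rw [mul_sub, h3]
  ring
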